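/- arXiv:1907.08865 — 5 statements merged into one kernel-verified Lean document; each statement's English description precedes it below -/
import Mathlib

section
/- Every hierarchically colored cograph is properly colored, i.e., if $(G,\sigma)$ is an hc-cograph then $\sigma(u) \neq \sigma(v)$ for every edge $uv$ of $G$. -/
namespace RBMGPaper

variable {V : Type*} {C : Type*}

/-- `HCOn G σ A` asserts that the subgraph of the vertex-colored graph `(G, σ)` induced on the
vertex set `A` is a hierarchically colored cograph, built recursively via (K1)–(K3). -/
inductive HCOn (G : SimpleGraph V) (σ : V → C) : Set V → Prop
  | single (v : V) : HCOn G σ {v}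
  | join (A B : Set V) (hA : A.Nonempty) (hB : B.Nonempty) (hdisj : Disjoint A B)
      (hadj : ∀ a ∈ A, ∀ b ∈ B, G.Adj a b)
      (hcol : Disjoint (σ '' A) (σ '' B))
      (h1 : HCOn G σ A) (h2 : HCOn G σ B) : HCOn G σ (A ∪ B)
  | union (A B : Set V) (hA : A.Nonempty) (hB : B.Nonempty) (hdisj : Disjoint A B)
      (hadj : ∀ a ∈ A, ∀ b ∈ B, ¬ G.Adj a b)
      (hcol : σ '' A ⊆ σ '' B ∨ σ '' B ⊆ σ '' A)
      (h1 : HCOn G σ A) (h2 : HCOn G σ B) : HCOn G σ (A ∪ B)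

/-- `(G, σ)` is a hierarchically colored cograph (hc-cograph). -/
def IsHCCograph (G : SimpleGraph V) (σ : V → C) : Prop :=
  HCOn G σ Set.univ

/-- `CographOn G A` asserts that the subgraph of `G` induced on `A` is a cograph. -/
inductive CographOn (G : SimpleGraph V) : Set V → Prop
  | single (v : V) : CographOn G {v}
  | union (A B : Set V) (hA : A.Nonempty) (hB : B.Nonempty) (hdisj : Disjoint A B)
      (hadj : ∀ a ∈ A, ∀ b ∈ B, ¬ G.Adj a b)
      (h1 : CographOn G A) (h2 : CographOn G B) : CographOn G (A ∪ B)
  | join (A B : Set V) (hA : A.Nonempty) (hB : B.Nonempty) (hdisj : Disjoint A B)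
      (hadj : ∀ a ∈ A, ∀ b ∈ B, G.Adj a b)
      (h1 : CographOn G A) (h2 : CographOn G B) : CographOn G (A ∪ B)

/-- `G` is a cograph. -/
def IsCograph (G : SimpleGraph V) : Prop := CographOn G Set.univ

/-- The set `s` induces a biclique (complete bipartite graph, possibly `K₁`) in `G`. -/
def IsBiclique (G : SimpleGraph V) (s : Set V) : Prop :=
  ∃ A B : Set V, s = A ∪ B ∧ Disjoint A B ∧
    ∀ u ∈ s, ∀ v ∈ s, (G.Adj u v ↔ ((u ∈ A ∧ v ∈ B) ∨ (u ∈ B ∧ v ∈ A)))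

/-- `G` is a bicluster graph: every connected component is a biclique. -/
def IsBiclusterGraph (G : SimpleGraph V) : Prop :=
  ∀ c : G.ConnectedComponent, IsBiclique G c.supp

/-- `addHub G` is the graph `G + x`: a new vertex (`none`) adjacent to all vertices of `G`. -/
def addHub (G : SimpleGraph V) : SimpleGraph (Option V) where
  Adj u v :=
    (∃ a b, u = some a ∧ v = some b ∧ G.Adj a b) ∨
    (u = none ∧ ∃ b, v = some b) ∨ ((∃ a, u = some a) ∧ v = none)
  symm := by
    constructor
    rintro u v (⟨a, b, rfl, rfl, h⟩ | ⟨rfl, b, rfl⟩ | ⟨⟨a, rfl⟩, rfl⟩)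
    · exact Or.inl ⟨b, a, rfl, rfl, h.symm⟩
    · exact Or.inr (Or.inr ⟨⟨b, rfl⟩, rfl⟩)
    · exact Or.inr (Or.inl ⟨rfl, a, rfl⟩)
  loopless := by
    constructor
    rintro u (⟨a, b, rfl, hb, h⟩ | ⟨rfl, b, hb⟩ | ⟨⟨a, rfl⟩, hb⟩)
    · exact G.irrefl (Option.some_injective V hb ▸ h)
    · exact nomatch hb
    · exact nomatch hb


/-- Every hierarchically colored cograph is properly colored: if `(G, σ)` is an
hc-cograph then `σ u ≠ σ v` for every edge `uv` of `G`. -/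
theorem hcCograph_properlyColored [Fintype V] (G : SimpleGraph V) (σ : V → C)
    (h : IsHCCograph G σ) :
    ∀ u v : V, G.Adj u v → σ u ≠ σ v := by
  have key : ∀ s : Set V, HCOn G σ s → ∀ u ∈ s, ∀ v ∈ s, G.Adj u v → σ u ≠ σ v := by
    intro s hs
    induction hs with
    | single w =>
      rintro u rfl v rfl hadj
      exact absurd hadj (G.irrefl)
    | join A B hA hB hdisj hadj hcol h1 h2 ih1 ih2 =>
      rintro u (hu | hu) v (hv | hv) huv heq
      · exact ih1 u hu v hv huv heq
      · exact Set.disjoint_left.mp hcol ⟨u, hu, rfl⟩ ⟨v, hv, heq.symm⟩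
      · exact Set.disjoint_left.mp hcol ⟨v, hv, heq.symm⟩ ⟨u, hu, rfl⟩
      · exact ih2 u hu v hv huv heq
    | union A B hA hB hdisj hadj hcol h1 h2 ih1 ih2 =>
      rintro u (hu | hu) v (hv | hv) huv heq
      · exact ih1 u hu v hv huv heq
      · exact hadj u hu v hv huv
      · exact hadj v hv u hu huv.symm
      · exact ih2 u hu v hv huv heq
  exact fun u v huv => key Set.univ h u trivial v trivial huv

end RBMGPaper
end

section
/- An edgeless vertex-colored graph whose vertices carry at least two distinct colors is not an hc-cograph. In particular, the graph on two vertices $x,y$ with no edge and $\sigma(x) \neq \sigma(y)$ is a cograph but not an hc-cograph, so not every vertex-colored cograph is an hc-cograph. -/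
namespace RBMGPaper

variable {V : Type*} {C : Type*}

lemma hcOn_bot_mono {V C : Type*} (σ : V → C) {A : Set V}
    (h : HCOn (⊥ : SimpleGraph V) σ A) : ∃ c, ∀ v ∈ A, σ v = c := by
  induction h with
  | single v => exact ⟨σ v, fun w hw => by simp_all⟩
  | join A B hA hB hdisj hadj hcol h1 h2 ih1 ih2 =>
      obtain ⟨a, ha⟩ := hA; obtain ⟨b, hb⟩ := hB
      exact absurd (hadj a ha b hb) (by simp)
  | union A B hA hB hdisj hadj hcol h1 h2 ih1 ih2 =>
      obtain ⟨c, hc⟩ := ih1; obtain ⟨d, hd⟩ := ih2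
      obtain ⟨a, ha⟩ := hA; obtain ⟨b, hb⟩ := hB
      have hcd : c = d := by
        rcases hcol with hcol | hcol
        · obtain ⟨b', hb', hb'eq⟩ := hcol ⟨a, ha, rfl⟩
          rw [hc a ha] at hb'eq; rw [← hb'eq, hd b' hb']
        · obtain ⟨a', ha', ha'eq⟩ := hcol ⟨b, hb, rfl⟩
          rw [hd b hb] at ha'eq; rw [← ha'eq, hc a' ha']
      refine ⟨d, fun v hv => ?_⟩
      rcases hv with hv | hv
      · rw [hc v hv, hcd]
      · exact hd v hv

lemma main_aux (V C : Type*) (G : SimpleGraph V) (σ : V → C)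
    (hG : G = ⊥) (h2 : ∃ u v : V, σ u ≠ σ v) : ¬ IsHCCograph G σ := by
  subst hG
  obtain ⟨u, v, huv⟩ := h2
  intro h
  obtain ⟨c, hc⟩ := hcOn_bot_mono σ h
  exact huv ((hc u trivial).trans (hc v trivial).symm)

/-- An edgeless vertex-colored graph whose vertices carry at least two distinct
colors is not an hc-cograph.  In particular, the graph on two vertices with no edge and distinct
colors on the two vertices is a cograph but not an hc-cograph. -/
theorem edgeless_two_colors_not_hcCograph :
    (∀ (V C : Type*) [Fintype V] (G : SimpleGraph V) (σ : V → C),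
      G = ⊥ → (∃ u v : V, σ u ≠ σ v) → ¬ IsHCCograph G σ) ∧
    IsCograph (⊥ : SimpleGraph Bool) ∧
    (∀ (C : Type*) (σ : Bool → C), σ false ≠ σ true →
      ¬ IsHCCograph (⊥ : SimpleGraph Bool) σ) := by
  refine ⟨fun V C _ => main_aux V C, ?_, fun C σ h => main_aux Bool C _ σ rfl ⟨false, true, h⟩⟩
  have : (Set.univ : Set Bool) = {false} ∪ {true} := by
    ext b; cases b <;> simp
  rw [IsCograph, this]
  exact CographOn.union {false} {true} ⟨false, rfl⟩ ⟨true, rfl⟩ (by simp)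
    (by simp) (CographOn.single false) (CographOn.single true)

end RBMGPaper
end

section
/- For every cograph $G$ there exists a vertex coloring $\sigma$ of $G$ such that $(G,\sigma)$ is an hc-cograph. -/
namespace RBMGPaper

variable {V : Type*} {C : Type*}

theorem HCOn_congr {G : SimpleGraph V} {σ σ' : V → C} {A : Set V}
    (hh : HCOn G σ A) (he : Set.EqOn σ σ' A) : HCOn G σ' A := by
  induction hh with
  | single v => exact .single v
  | join A B hA hB hd hadj hcol h1 h2 ih1 ih2 =>
    have eA : Set.EqOn σ σ' A := he.mono Set.subset_union_left
    have eB : Set.EqOn σ σ' B := he.mono Set.subset_union_right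
    exact .join A B hA hB hd hadj (by rw [← eA.image_eq, ← eB.image_eq]; exact hcol)
      (ih1 eA) (ih2 eB)
  | union A B hA hB hd hadj hcol h1 h2 ih1 ih2 =>
    have eA : Set.EqOn σ σ' A := he.mono Set.subset_union_left
    have eB : Set.EqOn σ σ' B := he.mono Set.subset_union_right
    exact .union A B hA hB hd hadj (by rw [← eA.image_eq, ← eB.image_eq]; exact hcol)
      (ih1 eA) (ih2 eB)

theorem HCOn_comp {D : Type*} {G : SimpleGraph V} {σ : V → C} {f : C → D}
    (hf : Function.Injective f) {A : Set V} (hh : HCOn G σ A) : HCOn G (f ∘ σ) A := by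
  induction hh with
  | single v => exact .single v
  | join A B hA hB hd hadj hcol h1 h2 ih1 ih2 =>
    refine .join A B hA hB hd hadj ?_ ih1 ih2
    rw [Set.image_comp, Set.image_comp]
    exact (Set.disjoint_image_iff hf).mpr hcol
  | union A B hA hB hd hadj hcol h1 h2 ih1 ih2 =>
    refine .union A B hA hB hd hadj ?_ ih1 ih2
    rw [Set.image_comp, Set.image_comp]
    exact hcol.imp (Set.image_mono (f := f)) (Set.image_mono (f := f))

theorem exists_col {G : SimpleGraph V} {A : Set V} (h : CographOn G A) :
    ∃ (σ : V → ℕ) (n : ℕ), σ '' A = Set.Iio n ∧ HCOn G σ A := by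
  classical
  induction h with
  | single v =>
    refine ⟨fun _ => 0, 1, ?_, .single v⟩
    ext x; simp [Nat.lt_one_iff, eq_comm]
  | union A B hA hB hd hadj h1 h2 ih1 ih2 =>
    obtain ⟨σ1, n, hn, hc1⟩ := ih1
    obtain ⟨σ2, m, hm, hc2⟩ := ih2
    set σ : V → ℕ := fun v => if v ∈ A then σ1 v else σ2 v with hσ
    have eA : Set.EqOn σ1 σ A := fun v hv => (if_pos hv).symm
    have eB : Set.EqOn σ2 σ B := fun v hv =>
      (if_neg (fun h' => Set.disjoint_left.mp hd h' hv)).symm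
    refine ⟨σ, max n m, ?_, ?_⟩
    · rw [Set.image_union, ← eA.image_eq, ← eB.image_eq, hn, hm]
      ext x; simp [lt_max_iff]
    · refine .union A B hA hB hd hadj ?_ (HCOn_congr hc1 eA) (HCOn_congr hc2 eB)
      rw [← eA.image_eq, ← eB.image_eq, hn, hm]
      rcases le_total n m with h | h
      exacts [Or.inl (Set.Iio_subset_Iio h), Or.inr (Set.Iio_subset_Iio h)]
  | join A B hA hB hd hadj h1 h2 ih1 ih2 =>
    obtain ⟨σ1, n, hn, hc1⟩ := ih1
    obtain ⟨σ2, m, hm, hc2⟩ := ih2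
    set σ : V → ℕ := fun v => if v ∈ A then σ1 v else σ2 v + n with hσ
    have eA : Set.EqOn σ1 σ A := fun v hv => (if_pos hv).symm
    have eB : Set.EqOn (fun v => σ2 v + n) σ B := fun v hv =>
      (if_neg (fun h' => Set.disjoint_left.mp hd h' hv)).symm
    have himgA : σ '' A = Set.Iio n := by rw [← eA.image_eq, hn]
    have himgB : σ '' B = Set.Ico n (n + m) := by
      rw [← eB.image_eq]
      rw [show (fun v => σ2 v + n) '' B = (fun y => y + n) '' (σ2 '' B) from
        (Set.image_image (fun y => y + n) σ2 B).symm, hm]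
      ext x
      simp only [Set.mem_image, Set.mem_Iio, Set.mem_Ico]
      constructor
      · rintro ⟨y, hy, rfl⟩; omega
      · rintro ⟨h1, h2⟩; exact ⟨x - n, by omega, by omega⟩
    refine ⟨σ, n + m, ?_, ?_⟩
    · rw [Set.image_union, himgA, himgB]
      ext x; simp only [Set.mem_union, Set.mem_Iio, Set.mem_Ico]; omega
    · refine .join A B hA hB hd hadj ?_ (HCOn_congr hc1 eA)
        (HCOn_congr (HCOn_comp (add_left_injective n) hc2) eB)
      rw [himgA, himgB]
      rw [Set.disjoint_left]
      intro x hx hx'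
      simp only [Set.mem_Iio, Set.mem_Ico] at hx hx'
      omega

/-- For every cograph `G` there exists a vertex coloring `σ` such that `(G, σ)`
is an hc-cograph. -/
theorem cograph_exists_hierarchical_coloring [Fintype V] (G : SimpleGraph V)
    (h : IsCograph G) :
    ∃ (C : Type) (σ : V → C), IsHCCograph G σ := by
  obtain ⟨σ, n, _, hc⟩ := exists_col h
  exact ⟨ℕ, σ, hc⟩

end RBMGPaper
end

section
/- Let $(G,\sigma)$ be an edgeless vertex-colored graph whose vertices use exactly $n \geq 2$ distinct colors. Then there exists a set $F$ of unordered vertex pairs with $|F| = \binom{n}{2}$ such that $(G \triangle F, \sigma)$ is an hc-cograph; namely, choosing $n$ vertices of pairwise distinct colors and adding all $\binom{n}{2}$ edges between them yields an hc-cograph. -/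
namespace RBMGPaper

variable {V : Type*} {C : Type*}

/-- A finite nonempty clique with injective coloring is an hc-cograph. -/
lemma clique_hcOn (H : SimpleGraph V) (σ : V → C) :
    ∀ (m : ℕ) (A : Set V), A.Finite → A.ncard ≤ m → A.Nonempty →
      Set.InjOn σ A → (∀ a ∈ A, ∀ b ∈ A, a ≠ b → H.Adj a b) → HCOn H σ A := by
  intro m
  induction m with
  | zero =>
    intro A hfin hcard hne _ _
    exact absurd (Nat.le_zero.mp hcard) (hne.ncard_pos hfin).ne'
  | succ m ih =>
    intro A hfin hcard hne hinj hadj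
    obtain ⟨v, hv⟩ := hne
    by_cases hA : A \ {v} = ∅
    · have : A = {v} := by
        apply Set.eq_singleton_iff_unique_mem.mpr
        refine ⟨hv, fun u hu => ?_⟩
        by_contra h
        exact (Set.eq_empty_iff_forall_notMem.mp hA u) ⟨hu, h⟩
      rw [this]; exact HCOn.single v
    · have hA' : (A \ {v}).Nonempty := Set.nonempty_iff_ne_empty.mpr hA
      have hsub : A \ {v} ⊆ A := Set.diff_subset
      have hrec : HCOn H σ (A \ {v}) := by
        apply ih (A \ {v}) (hfin.subset hsub)
        · have := Set.ncard_diff_singleton_lt_of_mem hv hfin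
          omega
        · exact hA'
        · exact hinj.mono hsub
        · exact fun a ha b hb => hadj a (hsub ha) b (hsub hb)
      have := HCOn.join {v} (A \ {v}) (Set.singleton_nonempty v) hA'
        (by simp)
        (fun a ha b hb => hadj a (by rw [Set.mem_singleton_iff] at ha; rw [ha]; exact hv)
          b (hsub hb) (by rw [Set.mem_singleton_iff] at ha; subst ha; exact fun h => hb.2 h.symm))
        (by
          rw [Set.disjoint_left]
          rintro c ⟨a, ha, rfl⟩ ⟨b, hb, hcb⟩
          rw [Set.mem_singleton_iff] at ha; subst ha
          exact hb.2 (hinj (hsub hb) hv hcb))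
        (HCOn.single v) hrec
      rwa [Set.singleton_union, Set.insert_diff_singleton, Set.insert_eq_self.mpr hv] at this

/-- Adding isolated vertices whose colors appear in `A` preserves being hc. -/
lemma add_isolated [DecidableEq V] (H : SimpleGraph V) (σ : V → C) (A : Set V)
    (hA : HCOn H σ A) (hAne : A.Nonempty) :
    ∀ B : Finset V, Disjoint (↑B : Set V ) A → (∀ b ∈ B, ∀ u, ¬ H.Adj b u) →
      (σ '' ↑B ⊆ σ '' A) → HCOn H σ (A ∪ ↑B) := by
  intro B
  induction B using Finset.induction with
  | empty => intro _ _ _; simpa using hA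
  | insert v B hv ih =>
    intro hdisj hiso hcols
    have hBsub : (↑B : Set V) ⊆ ↑(insert v B) := by
      intro x hx; simp only [Finset.coe_insert, Set.mem_insert_iff]; exact Or.inr hx
    have hrec : HCOn H σ (A ∪ ↑B) :=
      ih (hdisj.mono_left hBsub) (fun b hb => hiso b (Finset.mem_insert_of_mem hb))
        ((Set.image_mono hBsub).trans hcols)
    have hvA : v ∉ A := Set.disjoint_left.mp hdisj (by simp)
    have := HCOn.union (A ∪ ↑B) {v} (hAne.mono Set.subset_union_left)
      (Set.singleton_nonempty v)
      (by
        rw [Set.disjoint_right]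
        rintro x rfl
        rintro (h | h)
        · exact hvA h
        · exact hv (by exact_mod_cast h))
      (fun a _ b hb hadj => by
        rw [Set.mem_singleton_iff] at hb; subst hb
        exact hiso b (Finset.mem_insert_self _ _) a hadj.symm)
      (Or.inr (by
        rintro c ⟨b, hb, rfl⟩
        rw [Set.mem_singleton_iff] at hb; subst hb
        have : σ b ∈ σ '' A := hcols ⟨b, by simp, rfl⟩
        exact Set.image_mono Set.subset_union_left this))
      hrec (HCOn.single v)
    have heq : (A ∪ ↑B) ∪ {v} = A ∪ ↑(insert v B) := by
      simp only [Finset.coe_insert]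
      rw [Set.union_assoc, Set.union_comm (↑B : Set V), Set.singleton_union]
    rwa [heq] at this

/-- Let `(G, σ)` be an edgeless vertex-colored graph whose vertices use exactly
`n ≥ 2` distinct colors.  Then there is a set `F` of unordered vertex pairs with
`|F| = n choose 2` such that `(G ∆ F, σ)` is an hc-cograph. -/
theorem edgeless_edit_to_hcCograph [Fintype V] (G : SimpleGraph V) (σ : V → C)
    (hE : G = ⊥) (n : ℕ) (hn : 2 ≤ n) (hcol : (Set.range σ).ncard = n) :
    ∃ F : Set (Sym2 V), (∀ e ∈ F, ¬ e.IsDiag) ∧ F.ncard = n.choose 2 ∧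
      IsHCCograph (SimpleGraph.fromEdgeSet (symmDiff G.edgeSet F)) σ := by
  classical
  have hfinr : (Set.range σ).Finite := Set.finite_range σ
  have hV : Nonempty V := by
    rcases ((Set.range σ).nonempty_of_ncard_ne_zero (by omega)) with ⟨c, v, rfl⟩
    exact ⟨v⟩
  set f : C → V := fun c => if h : ∃ v, σ v = c then h.choose else Classical.arbitrary V with hf
  have hfspec : ∀ c ∈ Set.range σ, σ (f c) = c := by
    intro c hc
    obtain ⟨v, hv⟩ := hc
    simp only [hf]
    rw [dif_pos ⟨v, hv⟩]
    exact (⟨v, hv⟩ : ∃ v, σ v = c).choose_spec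
  set S : Finset V := hfinr.toFinset.image f with hS
  have hmemS : ∀ v ∈ S, σ v ∈ Set.range σ ∧ f (σ v) = v := by
    intro v hv
    obtain ⟨c, hc, rfl⟩ := Finset.mem_image.mp hv
    rw [hfinr.mem_toFinset] at hc
    rw [hfspec c hc]
    exact ⟨hc, rfl⟩
  have himg : σ '' ↑S = Set.range σ := by
    apply Set.Subset.antisymm
    · rintro c ⟨v, _, rfl⟩; exact ⟨v, rfl⟩
    · intro c hc
      exact ⟨f c, Finset.mem_image_of_mem f (hfinr.mem_toFinset.mpr hc), hfspec c hc⟩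
  have hinj : Set.InjOn σ ↑S := by
    intro a ha b hb hab
    have ha' := hmemS a ha; have hb' := hmemS b hb
    rw [← ha'.2, ← hb'.2, hab]
  have hScard : S.card = n := by
    rw [hS, Finset.card_image_of_injOn, ← Set.ncard_eq_toFinset_card _ hfinr, hcol]
    intro a ha b hb hab
    simp only [Finset.mem_coe, hfinr.mem_toFinset] at ha hb
    rw [← hfspec a ha, ← hfspec b hb, hab]
  set Fs : Finset (Sym2 V) := S.sym2.filter (fun e => ¬ e.IsDiag) with hFs
  have hmemF : ∀ a b : V, s(a, b) ∈ Fs ↔ a ∈ S ∧ b ∈ S ∧ a ≠ b := by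
    intro a b
    rw [hFs, Finset.mem_filter, Finset.mk_mem_sym2_iff, Sym2.mk_isDiag_iff]
    tauto
  have hdiageq : S.sym2.filter (fun e => e.IsDiag) = S.image Sym2.diag := by
    ext e
    induction e using Sym2.ind with
    | _ x y =>
      simp only [Finset.mem_filter, Finset.mk_mem_sym2_iff, Finset.mem_image]
      simp only [Sym2.mk_isDiag_iff]
      constructor
      · rintro ⟨⟨hx, _⟩, rfl⟩; exact ⟨x, hx, rfl⟩
      · rintro ⟨a, ha, he⟩
        rw [show Sym2.diag a = s(a, a) from rfl, Sym2.eq_iff] at he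
        rcases he with ⟨rfl, rfl⟩ | ⟨rfl, rfl⟩ <;> exact ⟨⟨ha, ha⟩, rfl⟩
  have hcardF : Fs.card = n.choose 2 := by
    have hsplit := Finset.card_filter_add_card_filter_not
      (s := S.sym2) (p := fun e => e.IsDiag)
    rw [hdiageq, Finset.card_image_of_injective _ Sym2.diag_injective,
      Finset.card_sym2, hScard, ← hFs] at hsplit
    have : (n + 1).choose 2 = n + n.choose 2 := by
      rw [Nat.choose_succ_succ, Nat.choose_one_right]
    omega
  refine ⟨↑Fs, ?_, ?_, ?_⟩
  · intro e he
    rw [Finset.mem_coe, hFs, Finset.mem_filter] at he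
    exact he.2
  · rw [Set.ncard_coe_finset]; exact hcardF
  · have hG : SimpleGraph.fromEdgeSet (symmDiff G.edgeSet ↑Fs)
        = SimpleGraph.fromEdgeSet ↑Fs := by
      rw [hE, SimpleGraph.edgeSet_bot, ← Set.bot_eq_empty, bot_symmDiff]
    rw [IsHCCograph, hG]
    set H := SimpleGraph.fromEdgeSet (↑Fs : Set (Sym2 V)) with hH
    have hadjH : ∀ a b : V, H.Adj a b ↔ a ∈ S ∧ b ∈ S ∧ a ≠ b := by
      intro a b
      rw [hH, SimpleGraph.fromEdgeSet_adj, Finset.mem_coe, hmemF]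
      tauto
    have hSne : (↑S : Set V).Nonempty := by
      rw [Finset.coe_nonempty, ← Finset.card_pos, hScard]; omega
    have hclique : HCOn H σ ↑S :=
      clique_hcOn H σ (↑S : Set V).ncard ↑S S.finite_toSet le_rfl hSne hinj
        (fun a ha b hb hab => (hadjH a b).mpr ⟨ha, hb, hab⟩)
    have := add_isolated H σ ↑S hclique hSne Sᶜ
      (by rw [Finset.coe_compl]; exact disjoint_compl_left)
      (fun b hb u hadj => by
        rw [Finset.mem_compl] at hb
        exact hb ((hadjH b u).mp hadj).1)
      (by rw [himg]; exact Set.image_subset_range σ _)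
    rwa [Finset.coe_compl, Set.union_compl_self] at this

end RBMGPaper
end

section
/- The property of being an hc-cograph is not hereditary: there exists an hc-cograph $(G,\sigma)$ and a subset $W$ of its vertices such that the induced subgraph $(G[W], \sigma|_W)$ is not an hc-cograph. In particular, any hc-cograph containing two nonadjacent vertices of distinct colors has an induced subgraph on two vertices that is not an hc-cograph. -/
namespace RBMGPaper

variable {V : Type*} {C : Type*}

private lemma pair_not_hc {V : Type*} {C : Type*} (G : SimpleGraph V) (σ : V → C) (a b : V)
    (hab : a ≠ b) (hnadj : ¬ G.Adj a b) (hc : σ a ≠ σ b) :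
    ¬ HCOn G σ {a, b} := by
  intro h
  generalize hS : ({a, b} : Set V) = S at h
  induction h with
  | single v =>
      have ha : a ∈ ({v} : Set V) := hS ▸ (by simp : a ∈ ({a,b} : Set V))
      have hb : b ∈ ({v} : Set V) := hS ▸ (by simp : b ∈ ({a,b} : Set V))
      exact hab (ha.trans hb.symm)
  | join A B hA hB hdisj hadj hcol h1 h2 ih1 ih2 =>
      obtain ⟨x, hx⟩ := hA
      obtain ⟨y, hy⟩ := hB
      have hxy : x ≠ y := fun e => hdisj.ne_of_mem hx hy e
      have hxm : x ∈ ({a, b} : Set V) := hS ▸ Or.inl hx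
      have hym : y ∈ ({a, b} : Set V) := hS ▸ Or.inr hy
      have hadjxy := hadj x hx y hy
      rcases hxm with rfl | rfl <;> rcases hym with rfl | rfl
      · exact hxy rfl
      · exact hnadj hadjxy
      · exact hnadj hadjxy.symm
      · exact hxy rfl
  | union A B hA hB hdisj hadj hcol h1 h2 ih1 ih2 =>
      obtain ⟨x, hx⟩ := hA
      obtain ⟨y, hy⟩ := hB
      have hxy : x ≠ y := fun e => hdisj.ne_of_mem hx hy e
      have hxm : x ∈ ({a, b} : Set V) := hS ▸ Or.inl hx
      have hym : y ∈ ({a, b} : Set V) := hS ▸ Or.inr hy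
      have hAx : A = {x} := by
        ext z
        constructor
        · intro hz
          have hzm : z ∈ ({a, b} : Set V) := hS ▸ Or.inl hz
          have hzy : z ≠ y := fun e => hdisj.ne_of_mem hz hy e
          rcases hxm with h1 | h1 <;> rcases hym with h2 | h2 <;>
            rcases hzm with h3 | h3 <;> simp_all
        · rintro rfl; exact hx
      have hBy : B = {y} := by
        ext z
        constructor
        · intro hz
          have hzm : z ∈ ({a, b} : Set V) := hS ▸ Or.inr hz
          have hzx : z ≠ x := fun e => hdisj.ne_of_mem hx hz e.symm
          rcases hxm with h1 | h1 <;> rcases hym with h2 | h2 <;>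
            rcases hzm with h3 | h3 <;> simp_all
        · rintro rfl; exact hy
      rw [hAx, hBy] at hcol
      simp only [Set.image_singleton, Set.singleton_subset_iff, Set.mem_singleton_iff] at hcol
      have hcxy : σ x = σ y := by rcases hcol with h' | h' <;> [exact h'; exact h'.symm]
      rcases hxm with rfl | rfl <;> rcases hym with rfl | rfl
      · exact hxy rfl
      · exact hc hcxy
      · exact hc hcxy.symm
      · exact hxy rfl

private lemma not_hc_induced {V : Type*} {C : Type*} (G : SimpleGraph V) (σ : V → C)
    (u v : V) (huv : u ≠ v) (hnadj : ¬ G.Adj u v) (hc : σ u ≠ σ v) :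
    ¬ IsHCCograph (G.induce {u, v}) (fun w => σ w.val) := by
  intro h
  set W : Set V := {u, v} with hW
  have hu : u ∈ W := Or.inl rfl
  have hv : v ∈ W := Or.inr rfl
  set a : W := ⟨u, hu⟩
  set b : W := ⟨v, hv⟩
  have huniv : (Set.univ : Set W) = {a, b} := by
    ext z
    simp only [Set.mem_univ, true_iff]
    obtain ⟨z, hz⟩ := z
    rcases hz with rfl | rfl
    · exact Or.inl rfl
    · exact Or.inr rfl
  have h' : HCOn (G.induce W) (fun w => σ w.val) {a, b} := huniv ▸ h
  refine pair_not_hc _ _ a b ?_ ?_ ?_ h'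
  · intro e; exact huv (congrArg Subtype.val e)
  · intro e; exact hnadj e
  · exact hc

private def exG : SimpleGraph (Fin 3) where
  Adj x y := (x = 0 ∧ y = 1) ∨ (x = 1 ∧ y = 0)
  symm := by
    constructor
    rintro x y (⟨rfl, rfl⟩ | ⟨rfl, rfl⟩)
    · exact Or.inr ⟨rfl, rfl⟩
    · exact Or.inl ⟨rfl, rfl⟩
  loopless := by
    constructor
    rintro x (⟨rfl, h⟩ | ⟨rfl, h⟩) <;> exact absurd h (by decide)

private def exσ : Fin 3 → Bool := fun x => x = 1

private lemma exG_hc : IsHCCograph exG exσ := by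
  have h01 : HCOn exG exσ ({0} ∪ {1} : Set (Fin 3)) := by
    refine HCOn.join {0} {1} ⟨0, rfl⟩ ⟨1, rfl⟩ ?_ ?_ ?_ (HCOn.single 0) (HCOn.single 1)
    · simp [Set.disjoint_singleton_left]
    · rintro a rfl b rfl; exact Or.inl ⟨rfl, rfl⟩
    · simp [Set.disjoint_singleton_left, exσ]
  have h012 : HCOn exG exσ (({0} ∪ {1}) ∪ {2} : Set (Fin 3)) := by
    refine HCOn.union ({0} ∪ {1}) {2} ⟨0, Or.inl rfl⟩ ⟨2, rfl⟩ ?_ ?_ ?_ h01 (HCOn.single 2)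
    · simp [Set.disjoint_singleton_right]
    · rintro x (rfl | rfl) y rfl <;> rintro (⟨h1, h2⟩ | ⟨h1, h2⟩) <;>
        first
        | exact absurd h1 (by decide)
        | exact absurd h2 (by decide)
    · refine Or.inr ?_
      rintro c ⟨x, rfl, rfl⟩
      exact ⟨0, Or.inl rfl, by decide⟩
  have huniv : (Set.univ : Set (Fin 3)) = ({0} ∪ {1}) ∪ {2} := by
    ext x; fin_cases x <;> simp
  unfold IsHCCograph
  rw [huniv]
  exact h012

/-- Being an hc-cograph is not hereditary: there is an hc-cograph `(G, σ)` and
a vertex subset `W` such that the induced subgraph `(G[W], σ|_W)` is not an hc-cograph.  In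
particular, any hc-cograph containing two nonadjacent vertices of distinct colors has an induced
subgraph on two vertices that is not an hc-cograph. -/
theorem hcCograph_not_hereditary :
    (∃ (V C : Type) (G : SimpleGraph V) (σ : V → C) (W : Set V),
      IsHCCograph G σ ∧ ¬ IsHCCograph (G.induce W) (fun w => σ w.val)) ∧
    (∀ (V C : Type*) (G : SimpleGraph V) (σ : V → C), IsHCCograph G σ →
      ∀ u v : V, u ≠ v → ¬ G.Adj u v → σ u ≠ σ v →
        ¬ IsHCCograph (G.induce {u, v}) (fun w => σ w.val)) := by
  constructor
  · refine ⟨Fin 3, Bool, exG, exσ, {1, 2}, exG_hc, ?_⟩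
    refine not_hc_induced exG exσ 1 2 (by decide) ?_ (by decide)
    rintro (⟨h1, h2⟩ | ⟨h1, h2⟩) <;>
      first
      | exact absurd h1 (by decide)
      | exact absurd h2 (by decide)
  · exact fun V C G σ hG u v huv hnadj hc => not_hc_induced G σ u v huv hnadj hc

end RBMGPaper
end
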